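/- Let X be a real Hilbert space, n ≥ 2, ψ ∈ Ψ_n, and v_1,…,v_n ∈ X distinct. Define f(u) := |||(u−v_1,…,u−v_n)|||_ψ for u ∈ X. Then the set of global minimizers of f over X is nonempty and is contained in the convex hull of {v_1,…,v_n}. -/

import Mathlib

open Finset

def PsiClass (n : ℕ) (ψ : (Fin n → ℝ) → ℝ) : Prop :=
  ContinuousOn ψ (stdSimplex ℝ (Fin n)) ∧
  ConvexOn ℝ (stdSimplex ℝ (Fin n)) ψ ∧
  (∀ i : Fin n, ψ (fun j => if j = i then 1 else 0) = 1) ∧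
  (∀ t ∈ stdSimplex ℝ (Fin n), ∀ i : Fin n, t i < 1 →
    (1 - t i) * ψ (fun j => if j = i then 0 else t j / (1 - t i)) ≤ ψ t)

open scoped Classical in
noncomputable def Npsi {n : ℕ} (ψ : (Fin n → ℝ) → ℝ) (a : Fin n → ℝ) : ℝ :=
  if a = 0 then 0 else (∑ i, a i) * ψ (fun i => a i / ∑ j, a j)

variable {n : ℕ} {ψ : (Fin n → ℝ) → ℝ}

lemma Npsi_zero : Npsi ψ (0 : Fin n → ℝ) = 0 := if_pos rfl

lemma Npsi_eq {a : Fin n → ℝ} (ha : a ≠ 0) :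
    Npsi ψ a = (∑ i, a i) * ψ (fun i => a i / ∑ j, a j) := by
  rw [Npsi, if_neg ha]

lemma sum_pos_of_ne_zero {a : Fin n → ℝ} (ha : ∀ i, 0 ≤ a i) (h : a ≠ 0) :
    0 < ∑ i, a i := by
  obtain ⟨i, hi⟩ : ∃ i, a i ≠ 0 := by
    by_contra hc
    push_neg at hc
    exact h (funext hc)
  exact Finset.sum_pos' (fun j _ => ha j) ⟨i, Finset.mem_univ i, (ha i).lt_of_ne (Ne.symm hi)⟩

lemma div_sum_mem_simplex {a : Fin n → ℝ} (ha : ∀ i, 0 ≤ a i) (hs : 0 < ∑ i, a i) :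
    (fun i => a i / ∑ j, a j) ∈ stdSimplex ℝ (Fin n) := by
  refine ⟨fun i => div_nonneg (ha i) hs.le, ?_⟩
  rw [← Finset.sum_div, div_self hs.ne']

lemma psi_le_one (hψ : PsiClass n ψ) {t : Fin n → ℝ} (ht : t ∈ stdSimplex ℝ (Fin n)) :
    ψ t ≤ 1 := by
  have h := hψ.2.1.map_sum_le (t := Finset.univ) (w := t)
    (p := fun i => (fun j => if j = i then (1:ℝ) else 0)) (fun i _ => ht.1 i) ht.2
    (fun i _ => by
      refine ⟨fun j => by positivity, ?_⟩
      simp)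
  have he : (∑ i, t i • (fun j => if j = i then (1:ℝ) else 0)) = t := by
    funext j
    simp [Finset.sum_apply, mul_ite]
  rw [he] at h
  calc ψ t ≤ ∑ i, t i * ψ (fun j => if j = i then (1:ℝ) else 0) := h
    _ = ∑ i, t i := by
        refine Finset.sum_congr rfl fun i _ => ?_
        rw [hψ.2.2.1 i, mul_one]
    _ = 1 := ht.2

lemma coord_le_psi (hψ : PsiClass n ψ) :
    ∀ t ∈ stdSimplex ℝ (Fin n), ∀ j, t j ≤ ψ t := by
  suffices H : ∀ k : ℕ, ∀ t ∈ stdSimplex ℝ (Fin n), ∀ j : Fin n,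
      (Finset.univ.filter (fun i => t i ≠ 0 ∧ i ≠ j)).card ≤ k → t j ≤ ψ t by
    intro t ht j
    exact H _ t ht j le_rfl
  intro k
  induction k with
  | zero =>
    intro t ht j hc
    have hz : ∀ i, i ≠ j → t i = 0 := by
      intro i hij
      by_contra hti
      have : i ∈ Finset.univ.filter (fun i => t i ≠ 0 ∧ i ≠ j) := by
        simp [hti, hij]
      have he : (Finset.univ.filter (fun i => t i ≠ 0 ∧ i ≠ j)) = ∅ :=
        Finset.card_eq_zero.mp (Nat.le_zero.mp hc)
      rw [he] at this
      exact absurd this (Finset.notMem_empty i)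
    have htj : t j = 1 := by
      have := ht.2
      rwa [Finset.sum_eq_single j (fun i _ hij => hz i hij) (fun h => absurd (Finset.mem_univ j) h)] at this
    have : t = fun i => if i = j then (1:ℝ) else 0 := by
      funext i
      by_cases hij : i = j
      · simp [hij, htj]
      · simp [hij, hz i hij]
    rw [this, hψ.2.2.1 j]
    simp
  | succ k ih =>
    intro t ht j hc
    by_cases hck : (Finset.univ.filter (fun i => t i ≠ 0 ∧ i ≠ j)).card ≤ k
    · exact ih t ht j hck
    obtain ⟨i, hi⟩ : ∃ i, t i ≠ 0 ∧ i ≠ j := by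
      by_contra hc2
      push_neg at hc2
      have : (Finset.univ.filter (fun i => t i ≠ 0 ∧ i ≠ j)).card = 0 := by
        rw [Finset.card_eq_zero]
        ext x
        simp only [Finset.mem_filter, Finset.mem_univ, true_and, Finset.notMem_empty,
          iff_false, not_and]
        exact fun hx hxj => hxj (hc2 x hx)
      omega
    by_cases hti1 : t i = 1
    · -- then t j = 0 ≤ ψ t ; in fact t = e_i
      have hz : ∀ m, m ≠ i → t m = 0 := by
        intro m hmi
        have hsum := ht.2
        have h1 : ∑ x ∈ Finset.univ.erase i, t x = 0 := by
          have := Finset.add_sum_erase Finset.univ t (Finset.mem_univ i)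
          rw [ht.2, hti1] at this
          linarith
        have := Finset.sum_eq_zero_iff_of_nonneg (fun x _ => ht.1 x) |>.mp h1 m
          (Finset.mem_erase.mpr ⟨hmi, Finset.mem_univ m⟩)
        exact this
      have htj : t j = 0 := hz j (fun h => hi.2 (h ▸ rfl))
      have : t = fun m => if m = i then (1:ℝ) else 0 := by
        funext m
        by_cases hmi : m = i
        · simp [hmi, hti1]
        · simp [hmi, hz m hmi]
      rw [htj, this, hψ.2.2.1 i]
      norm_num
    · have hti : t i < 1 := lt_of_le_of_ne (by
        -- t i ≤ 1 on simplex
        have := ht.2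
        have h1 : t i ≤ ∑ m, t m := Finset.single_le_sum (fun m _ => ht.1 m) (Finset.mem_univ i)
        linarith) hti1
      have h1ti : (0:ℝ) < 1 - t i := by linarith
      set t' : Fin n → ℝ := fun m => if m = i then 0 else t m / (1 - t i) with ht'def
      have ht' : t' ∈ stdSimplex ℝ (Fin n) := by
        constructor
        · intro m
          by_cases hmi : m = i
          · simp [ht'def, hmi]
          · simp only [ht'def, if_neg hmi]
            exact div_nonneg (ht.1 m) h1ti.le
        · have h0 : ∑ m, t' m = ∑ m ∈ Finset.univ.erase i, t' m := by
            rw [← Finset.add_sum_erase Finset.univ t' (Finset.mem_univ i)]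
            simp [ht'def]
          have h1 : ∑ m ∈ Finset.univ.erase i, t' m
              = ∑ m ∈ Finset.univ.erase i, t m / (1 - t i) :=
            Finset.sum_congr rfl fun m hm => by simp [ht'def, (Finset.mem_erase.mp hm).1]
          rw [h0, h1, ← Finset.sum_div]
          have hse : ∑ m ∈ Finset.univ.erase i, t m = 1 - t i := by
            have := Finset.add_sum_erase Finset.univ t (Finset.mem_univ i)
            rw [ht.2] at this
            linarith
          rw [hse, div_self h1ti.ne']
      have hcard : (Finset.univ.filter (fun m => t' m ≠ 0 ∧ m ≠ j)).card ≤ k := by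
        have hsub : Finset.univ.filter (fun m => t' m ≠ 0 ∧ m ≠ j) ⊆
            (Finset.univ.filter (fun m => t m ≠ 0 ∧ m ≠ j)).erase i := by
          intro m hm
          simp only [Finset.mem_filter, Finset.mem_univ, true_and] at hm
          refine Finset.mem_erase.mpr ⟨?_, ?_⟩
          · intro hmi
            exact hm.1 (by simp [ht'def, hmi])
          · simp only [Finset.mem_filter, Finset.mem_univ, true_and]
            refine ⟨?_, hm.2⟩
            intro htm
            exact hm.1 (by
              by_cases hmi : m = i
              · simp [ht'def, hmi]
              · simp [ht'def, hmi, htm])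
        have hicard : i ∈ Finset.univ.filter (fun m => t m ≠ 0 ∧ m ≠ j) := by
          simp [hi.1, hi.2]
        have := Finset.card_le_card hsub
        have h2 := Finset.card_erase_of_mem hicard
        omega
      have hrec := hψ.2.2.2 t ht i hti
      have hIH := ih t' ht' j hcard
      have ht'j : t' j = t j / (1 - t i) := by
        simp only [ht'def]
        rw [if_neg (fun h => hi.2 h.symm)]
      calc t j = (1 - t i) * (t j / (1 - t i)) := by field_simp
        _ ≤ (1 - t i) * ψ t' := by
            apply mul_le_mul_of_nonneg_left _ h1ti.le
            rw [← ht'j]; exact hIH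
        _ ≤ ψ t := hrec

lemma Npsi_smul {c : ℝ} (hc : 0 ≤ c) (a : Fin n → ℝ) :
    Npsi ψ (c • a) = c * Npsi ψ a := by
  rcases hc.eq_or_lt with rfl | hc
  · rw [zero_smul, Npsi_zero, zero_mul]
  · by_cases ha : a = 0
    · rw [ha, smul_zero, Npsi_zero, mul_zero]
    · have h2 : c • a ≠ 0 := smul_ne_zero hc.ne' ha
      rw [Npsi_eq h2, Npsi_eq ha]
      have hsum : ∑ i, (c • a) i = c * ∑ i, a i := by
        simp [Finset.mul_sum]
      have harg : (fun i => (c • a) i / ∑ j, (c • a) j) = fun i => a i / ∑ j, a j := by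
        funext i
        rw [hsum]
        simp only [Pi.smul_apply, smul_eq_mul]
        rw [mul_div_mul_left _ _ hc.ne']
      rw [harg, hsum]
      ring

lemma coord_le_Npsi (hψ : PsiClass n ψ) {a : Fin n → ℝ} (ha : ∀ i, 0 ≤ a i) (j : Fin n) :
    a j ≤ Npsi ψ a := by
  by_cases h : a = 0
  · rw [h, Npsi_zero]; simp
  · have hs := sum_pos_of_ne_zero ha h
    rw [Npsi_eq h]
    have := coord_le_psi hψ _ (div_sum_mem_simplex ha hs) j
    calc a j = (∑ i, a i) * (a j / ∑ i, a i) := by field_simp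
      _ ≤ (∑ i, a i) * ψ (fun i => a i / ∑ j, a j) :=
          mul_le_mul_of_nonneg_left this hs.le

lemma Npsi_nonneg (hψ : PsiClass n ψ) {a : Fin n → ℝ} (ha : ∀ i, 0 ≤ a i) :
    0 ≤ Npsi ψ a := by
  by_cases h : a = 0
  · rw [h, Npsi_zero]
  · obtain ⟨i, hi⟩ : ∃ i, a i ≠ 0 := by
      by_contra hc; push_neg at hc; exact h (funext hc)
    exact le_trans (ha i) (coord_le_Npsi hψ ha i)

lemma Npsi_convexOn (hψ : PsiClass n ψ) :
    ConvexOn ℝ {a : Fin n → ℝ | ∀ i, 0 ≤ a i} (Npsi ψ) := by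
  constructor
  · intro x hx y hy p q hp hq _ i
    exact add_nonneg (mul_nonneg hp (hx i)) (mul_nonneg hq (hy i))
  · intro x hx y hy p q hp hq hpq
    rcases hp.eq_or_lt with rfl | hp'
    · have : q = 1 := by linarith
      subst this
      simp [Npsi_smul, le_refl]
    rcases hq.eq_or_lt with rfl | hq'
    · have : p = 1 := by linarith
      subst this
      simp [Npsi_smul, le_refl]
    by_cases hx0 : x = 0
    · subst hx0
      rw [smul_zero, zero_add, Npsi_smul hq]
      simp only [smul_eq_mul, Npsi_zero, mul_zero, zero_add]
      exact le_refl _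
    by_cases hy0 : y = 0
    · subst hy0
      rw [smul_zero, add_zero, Npsi_smul hp]
      simp only [smul_eq_mul, Npsi_zero, mul_zero, add_zero]
      exact le_refl _
    have hSx := sum_pos_of_ne_zero hx hx0
    have hSy := sum_pos_of_ne_zero hy hy0
    set Sx := ∑ i, x i
    set Sy := ∑ i, y i
    set s := p * Sx + q * Sy with hsdef
    have hs : 0 < s := by positivity
    have hz : ∀ i, 0 ≤ (p • x + q • y) i := fun i =>
      add_nonneg (mul_nonneg hp (hx i)) (mul_nonneg hq (hy i))
    have hzsum : ∑ i, (p • x + q • y) i = s := by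
      simp [Finset.sum_add_distrib, ← Finset.mul_sum, hsdef]
      rfl
    have hz0 : p • x + q • y ≠ 0 := by
      intro h
      rw [h] at hzsum
      simp at hzsum
      rw [← hzsum] at hs
      exact lt_irrefl _ hs
    rw [Npsi_eq hz0, Npsi_eq hx0, Npsi_eq hy0, hzsum]
    set μ := p * Sx / s
    set ν := q * Sy / s
    have hμ : 0 ≤ μ := by positivity
    have hν : 0 ≤ ν := by positivity
    have hμν : μ + ν = 1 := by
      simp only [μ, ν]; rw [← add_div, ← hsdef, div_self hs.ne']
    have harg : (fun i => (p • x + q • y) i / s)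
        = μ • (fun i => x i / Sx) + ν • (fun i => y i / Sy) := by
      funext i
      simp only [Pi.add_apply, Pi.smul_apply, smul_eq_mul, μ, ν]
      field_simp
      try ring
    have hkey := hψ.2.1.2 (div_sum_mem_simplex hx hSx) (div_sum_mem_simplex hy hSy)
      hμ hν hμν
    rw [← harg] at hkey
    calc s * ψ (fun i => (p • x + q • y) i / s)
        ≤ s * (μ * ψ (fun i => x i / Sx) + ν * ψ (fun i => y i / Sy)) :=
          mul_le_mul_of_nonneg_left hkey hs.le
      _ = p * (Sx * ψ (fun i => x i / Sx)) + q * (Sy * ψ (fun i => y i / Sy)) := by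
          have e1 : s * μ = p * Sx := by simp only [μ]; rw [mul_comm, div_mul_cancel₀ _ hs.ne']
          have e2 : s * ν = q * Sy := by simp only [ν]; rw [mul_comm, div_mul_cancel₀ _ hs.ne']
          rw [mul_add, ← mul_assoc, ← mul_assoc, e1, e2]; ring
          try ring

lemma Npsi_update_zero (hψ : PsiClass n ψ) {x : Fin n → ℝ} (hx : ∀ i, 0 ≤ x i) (i : Fin n) :
    Npsi ψ (Function.update x i 0) ≤ Npsi ψ x := by
  have hupd : ∀ j, 0 ≤ Function.update x i 0 j := fun j => by
    by_cases hj : j = i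
    · subst hj; rw [Function.update_self]
    · rw [Function.update_of_ne hj]; exact hx j
  by_cases h0 : Function.update x i 0 = 0
  · rw [h0, Npsi_zero]; exact Npsi_nonneg hψ hx
  have hS' := sum_pos_of_ne_zero hupd h0
  have hx0 : x ≠ 0 := by
    intro h
    subst h
    exact h0 (funext fun j => by
      by_cases hj : j = i <;> simp [Function.update_apply, hj])
  have hS := sum_pos_of_ne_zero hx hx0
  set S := ∑ j, x j with hSdef
  have hsumupd : ∑ j, Function.update x i 0 j = S - x i := by
    rw [Finset.sum_update_of_mem (Finset.mem_univ i)]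
    have : ∑ j ∈ Finset.univ \ {i}, x j = S - x i := by
      rw [Finset.sum_sdiff_eq_sub (by simp)]
      simp [hSdef]
    rw [this]; ring
  have hSxi : 0 < S - x i := by rw [← hsumupd]; exact hS'
  have hxiS : x i / S < 1 := by
    rw [div_lt_one hS]; linarith
  have ht := div_sum_mem_simplex hx hS
  have h4 : (0:ℝ) < 1 - x i / S := by rw [sub_pos]; exact hxiS
  have h5 : S * (1 - x i / S) = S - x i := by field_simp
  rw [Npsi_eq h0, Npsi_eq hx0, hsumupd]
  simp only [← hSdef]
  have harg : (fun j => Function.update x i 0 j / (S - x i))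
      = (fun j => if j = i then 0 else x j / S / (1 - x i / S)) := by
    funext j
    by_cases hj : j = i
    · subst hj; rw [Function.update_self, if_pos rfl, zero_div]
    · rw [Function.update_of_ne hj, if_neg hj]
      rw [div_div, h5]
  rw [harg]
  have hrec' : (1 - x i / S) * ψ (fun j => if j = i then 0 else x j / S / (1 - x i / S))
      ≤ ψ (fun m => x m / S) := by
    have := hψ.2.2.2 _ ht i hxiS
    simpa only [← hSdef] using this
  calc (S - x i) * ψ (fun j => if j = i then 0 else x j / S / (1 - x i / S))
      = S * ((1 - x i / S) * ψ (fun j => if j = i then 0 else x j / S / (1 - x i / S))) := by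
        rw [← h5]; ring
    _ ≤ S * ψ (fun m => x m / S) := mul_le_mul_of_nonneg_left hrec' hS.le

lemma Npsi_update_mono (hψ : PsiClass n ψ) {x : Fin n → ℝ} (hx : ∀ i, 0 ≤ x i) (i : Fin n)
    {s s' : ℝ} (hs : 0 ≤ s) (hss : s ≤ s') :
    Npsi ψ (Function.update x i s) ≤ Npsi ψ (Function.update x i s') := by
  have hs' : 0 ≤ s' := hs.trans hss
  rcases hs'.eq_or_lt with rfl | hs'pos
  · have : s = 0 := le_antisymm hss hs
    subst this
    exact le_refl _
  set θ := s / s' with hθdef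
  have hθ0 : 0 ≤ θ := div_nonneg hs hs'pos.le
  have hθ1 : θ ≤ 1 := by rw [hθdef, div_le_one hs'pos]; exact hss
  have hmemz : ∀ j, 0 ≤ Function.update x i 0 j := fun j => by
    by_cases hj : j = i
    · subst hj; rw [Function.update_self]
    · rw [Function.update_of_ne hj]; exact hx j
  have hmems' : ∀ j, 0 ≤ Function.update x i s' j := fun j => by
    by_cases hj : j = i
    · subst hj; rw [Function.update_self]; exact hs'pos.le
    · rw [Function.update_of_ne hj]; exact hx j
  have hcomb : Function.update x i s
      = (1 - θ) • Function.update x i 0 + θ • Function.update x i s' := by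
    funext j
    simp only [Pi.add_apply, Pi.smul_apply, smul_eq_mul]
    by_cases hj : j = i
    · subst hj
      rw [Function.update_self, Function.update_self, Function.update_self, hθdef]
      field_simp
      ring
    · rw [Function.update_of_ne hj, Function.update_of_ne hj, Function.update_of_ne hj]
      ring
  have hconv := (Npsi_convexOn hψ).2 hmemz hmems'
    (show (0:ℝ) ≤ 1 - θ by linarith) hθ0 (show (1 - θ) + θ = 1 by ring)
  rw [← hcomb] at hconv
  simp only [smul_eq_mul] at hconv
  have hz : Npsi ψ (Function.update x i 0) ≤ Npsi ψ (Function.update x i s') := by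
    have := Npsi_update_zero hψ hmems' i
    rwa [Function.update_idem] at this
  calc Npsi ψ (Function.update x i s)
      ≤ (1 - θ) * Npsi ψ (Function.update x i 0) + θ * Npsi ψ (Function.update x i s') := hconv
    _ ≤ (1 - θ) * Npsi ψ (Function.update x i s') + θ * Npsi ψ (Function.update x i s') := by
        have h1θ : 0 ≤ 1 - θ := by linarith
        nlinarith [hz]
    _ = Npsi ψ (Function.update x i s') := by ring

lemma Npsi_mono (hψ : PsiClass n ψ) {a b : Fin n → ℝ} (ha : ∀ i, 0 ≤ a i)
    (hab : ∀ i, a i ≤ b i) : Npsi ψ a ≤ Npsi ψ b := by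
  set c : ℕ → Fin n → ℝ := fun k j => if (j : ℕ) < k then a j else b j with hcdef
  have hc0 : c 0 = b := funext fun j => if_neg (Nat.not_lt_zero _)
  have hcn : c n = a := funext fun j => if_pos j.2
  have hcnonneg : ∀ k j, 0 ≤ c k j := fun k j => by
    by_cases h : (j : ℕ) < k
    · simp only [hcdef, if_pos h]; exact ha j
    · simp only [hcdef, if_neg h]; exact (ha j).trans (hab j)
  have hstep : ∀ k, Npsi ψ (c (k + 1)) ≤ Npsi ψ (c k) := by
    intro k
    by_cases hk : k < n
    · set i : Fin n := ⟨k, hk⟩ with hidef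
      have h1 : c (k + 1) = Function.update (c k) i (a i) := by
        funext j
        by_cases hj : j = i
        · subst hj
          rw [Function.update_self]
          simp only [hcdef, hidef]
          rw [if_pos (Nat.lt_succ_self k)]
        · rw [Function.update_of_ne hj]
          have hji : (j : ℕ) ≠ k := by
            intro h
            exact hj (Fin.ext h)
          simp only [hcdef]
          by_cases h2 : (j : ℕ) < k
          · rw [if_pos (Nat.lt_succ_of_lt h2), if_pos h2]
          · rw [if_neg (by omega), if_neg h2]
      have h2 : c k = Function.update (c k) i (b i) := by
        funext j
        by_cases hj : j = i
        · subst hj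
          rw [Function.update_self]
          simp only [hcdef, hidef]
          rw [if_neg (lt_irrefl k)]
        · rw [Function.update_of_ne hj]
      rw [h1]
      nth_rewrite 2 [h2]
      exact Npsi_update_mono hψ (hcnonneg k) i (ha i) (hab i)
    · have : c (k + 1) = c k := by
        funext j
        have hjk : (j : ℕ) < k := lt_of_lt_of_le j.2 (not_lt.mp hk)
        simp only [hcdef]
        rw [if_pos (Nat.lt_succ_of_lt hjk), if_pos hjk]
      rw [this]
  have hall : ∀ k, Npsi ψ (c k) ≤ Npsi ψ b := by
    intro k
    induction k with
    | zero => rw [hc0]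
    | succ k ih => exact (hstep k).trans ih
  have := hall n
  rwa [hcn] at this

lemma Npsi_strict (hψ : PsiClass n ψ) (hn : 0 < n) {a b : Fin n → ℝ}
    (ha : ∀ i, 0 ≤ a i) (hab : ∀ i, a i < b i) : Npsi ψ a < Npsi ψ b := by
  have hb : ∀ i, 0 < b i := fun i => (ha i).trans_lt (hab i)
  have hne : (Finset.univ : Finset (Fin n)).Nonempty := by
    refine ⟨⟨0, hn⟩, Finset.mem_univ _⟩
  set lam := Finset.univ.sup' hne (fun i => a i / b i) with hlamdef
  have hlam1 : lam < 1 := by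
    rw [hlamdef, Finset.sup'_lt_iff]
    intro i _
    rw [div_lt_one (hb i)]
    exact hab i
  have hlam0 : 0 ≤ lam := by
    have h1 : a (⟨0, hn⟩ : Fin n) / b (⟨0, hn⟩ : Fin n) ≤ lam := by
      rw [hlamdef]
      exact Finset.le_sup' (fun i => a i / b i) (Finset.mem_univ (⟨0, hn⟩ : Fin n))
    exact le_trans (div_nonneg (ha _) (hb _).le) h1
  have hale : ∀ i, a i ≤ (lam • b) i := by
    intro i
    have h1 : a i / b i ≤ lam := by
      rw [hlamdef]
      exact Finset.le_sup' (fun i => a i / b i) (Finset.mem_univ i)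
    have := mul_le_mul_of_nonneg_right h1 (hb i).le
    rw [div_mul_cancel₀ _ (hb i).ne'] at this
    simpa using this
  have hbpos : 0 < Npsi ψ b := by
    have := coord_le_Npsi hψ (fun i => (hb i).le) ⟨0, hn⟩
    exact lt_of_lt_of_le (hb _) this
  calc Npsi ψ a ≤ Npsi ψ (lam • b) := Npsi_mono hψ ha hale
    _ = lam * Npsi ψ b := Npsi_smul hlam0 b
    _ < 1 * Npsi ψ b := by
        exact mul_lt_mul_of_pos_right hlam1 hbpos
    _ = Npsi ψ b := one_mul _

open scoped Classical in
noncomputable def prodNorm {X : Type*} [NormedAddCommGroup X] {n : ℕ}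
    (ψ : (Fin n → ℝ) → ℝ) (x : Fin n → X) : ℝ :=
  if x = 0 then 0 else (∑ i, ‖x i‖) * ψ (fun i => ‖x i‖ / ∑ j, ‖x j‖)

lemma prodNorm_eq_Npsi {X : Type*} [NormedAddCommGroup X] {m : ℕ} (ψ' : (Fin m → ℝ) → ℝ)
    (x : Fin m → X) : prodNorm ψ' x = Npsi ψ' (fun i => ‖x i‖) := by
  by_cases h : x = 0
  · subst h
    unfold prodNorm
    rw [if_pos rfl]
    have he : (fun i : Fin m => ‖(0 : Fin m → X) i‖) = 0 := by
      funext i; simp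
    rw [he, Npsi_zero]
  · have h2 : (fun i => ‖x i‖) ≠ 0 := by
      intro hc
      apply h
      funext i
      have := congrFun hc i
      simpa using this
    unfold prodNorm
    rw [if_neg h, Npsi_eq h2]

theorem stmt_16 {X : Type*} [NormedAddCommGroup X] [InnerProductSpace ℝ X]
    [CompleteSpace X]
    (n : ℕ) (hn : 2 ≤ n) (ψ : (Fin n → ℝ) → ℝ) (hψ : PsiClass n ψ)
    (v : Fin n → X) (hv : Function.Injective v) :
    {u : X | ∀ w : X,
        prodNorm ψ (fun i => u - v i) ≤ prodNorm ψ (fun i => w - v i)}.Nonempty ∧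
      {u : X | ∀ w : X,
          prodNorm ψ (fun i => u - v i) ≤ prodNorm ψ (fun i => w - v i)} ⊆
        convexHull ℝ (Set.range v) := by
  have hn0 : 0 < n := by omega
  classical
  set K := convexHull ℝ (Set.range v) with hKdef
  have hKc : IsCompact K := (Set.finite_range v).isCompact_convexHull (𝕜 := ℝ)
  have hKconv : Convex ℝ K := convex_convexHull ℝ _
  have hvK : ∀ i, v i ∈ K := fun i => subset_convexHull ℝ _ (Set.mem_range_self i)
  have hKne : K.Nonempty := ⟨v ⟨0, hn0⟩, hvK _⟩
  have hPN : ∀ u : X, prodNorm ψ (fun i => u - v i) = Npsi ψ (fun i => ‖u - v i‖) :=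
    fun u => prodNorm_eq_Npsi ψ _
  have hvne : v ⟨0, hn0⟩ ≠ v ⟨1, by omega⟩ := fun h => by
    have := hv h
    simp [Fin.ext_iff] at this
  have hne0 : ∀ u : X, (fun i => ‖u - v i‖) ≠ 0 := by
    intro u hc
    have h0 : u = v ⟨0, hn0⟩ := by
      have := congrFun hc ⟨0, hn0⟩
      simpa [sub_eq_zero] using this
    have h1 : u = v ⟨1, by omega⟩ := by
      have := congrFun hc ⟨1, by omega⟩
      simpa [sub_eq_zero] using this
    exact hvne (h0 ▸ h1)
  have hSpos : ∀ u : X, 0 < ∑ i, ‖u - v i‖ := fun u =>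
    sum_pos_of_ne_zero (fun i => norm_nonneg _) (hne0 u)
  set g : X → ℝ := fun u => Npsi ψ (fun i => ‖u - v i‖) with hgdef
  have hgeq : ∀ u, g u = (∑ i, ‖u - v i‖) * ψ (fun i => ‖u - v i‖ / ∑ j, ‖u - v j‖) :=
    fun u => Npsi_eq (hne0 u)
  have hScont : Continuous fun u : X => ∑ i, ‖u - v i‖ :=
    continuous_finset_sum _ fun i _ => (continuous_id.sub continuous_const).norm
  have htcont : Continuous fun u : X => (fun i => ‖u - v i‖ / ∑ j, ‖u - v j‖) :=
    continuous_pi fun i => ((continuous_id.sub continuous_const).norm).div hScont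
      (fun u => (hSpos u).ne')
  have hmaps : ∀ u : X, (fun i => ‖u - v i‖ / ∑ j, ‖u - v j‖) ∈ stdSimplex ℝ (Fin n) :=
    fun u => div_sum_mem_simplex (fun i => norm_nonneg _) (hSpos u)
  have hgcont : Continuous g := by
    have h1 : Continuous fun u : X =>
        (∑ i, ‖u - v i‖) * ψ (fun i => ‖u - v i‖ / ∑ j, ‖u - v j‖) :=
      hScont.mul (hψ.1.comp_continuous htcont hmaps)
    have h2 : g = fun u : X =>
        (∑ i, ‖u - v i‖) * ψ (fun i => ‖u - v i‖ / ∑ j, ‖u - v j‖) := funext hgeq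
    rw [h2]
    exact h1
  have hproj : ∀ w : X, ∃ p ∈ K, (∀ i, ‖p - v i‖ ≤ ‖w - v i‖) ∧
      (w ∉ K → ∀ i, ‖p - v i‖ < ‖w - v i‖) := by
    intro w
    obtain ⟨p, hpK, hpmin⟩ := exists_norm_eq_iInf_of_complete_convex hKne
      hKc.isComplete hKconv w
    have hinner := (norm_eq_iInf_iff_real_inner_le_zero hKconv hpK).mp hpmin
    have hkey : ∀ i, ‖w - v i‖ ^ 2 ≥ ‖w - p‖ ^ 2 + ‖p - v i‖ ^ 2 := by
      intro i
      have h1 : inner ℝ (w - p) (v i - p) ≤ (0:ℝ) := hinner _ (hvK i)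
      have h2 := norm_sub_sq_real (w - p) (v i - p)
      rw [sub_sub_sub_cancel_right] at h2
      have h3 : ‖p - v i‖ = ‖v i - p‖ := norm_sub_rev _ _
      rw [h3]
      nlinarith
    refine ⟨p, hpK, ?_, ?_⟩
    · intro i
      have := hkey i
      nlinarith [norm_nonneg (w - v i), norm_nonneg (p - v i), norm_nonneg (w - p)]
    · intro hwK i
      have hwp : w ≠ p := fun h => hwK (h ▸ hpK)
      have hpos : (0:ℝ) < ‖w - p‖ := by
        rw [norm_pos_iff, sub_ne_zero]
        exact hwp
      have := hkey i
      nlinarith [norm_nonneg (w - v i), norm_nonneg (p - v i)]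
  obtain ⟨u₀, hu₀K, hu₀min⟩ := hKc.exists_isMinOn hKne hgcont.continuousOn
  constructor
  · refine ⟨u₀, fun w => ?_⟩
    obtain ⟨p, hpK, hple, _⟩ := hproj w
    rw [hPN u₀, hPN w]
    calc g u₀ ≤ g p := isMinOn_iff.mp hu₀min p hpK
      _ ≤ g w := Npsi_mono hψ (fun i => norm_nonneg _) hple
  · intro u hu
    by_contra huK
    obtain ⟨p, hpK, _, hstrict⟩ := hproj u
    have h1 : ∀ i, ‖p - v i‖ < ‖u - v i‖ := hstrict huK
    have h2 : g p < g u := Npsi_strict hψ hn0 (fun i => norm_nonneg _) h1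
    have h3 := hu p
    rw [hPN u, hPN p] at h3
    exact absurd h3 (not_le.mpr h2)
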